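/- arXiv:1411.3838 — 4 statements merged into one kernel-verified Lean document; each statement's English description precedes it below -/
import Mathlib

section
/- Let X and Y be independent positive real-valued random variables such that log X is Gaussian with mean μ_l and variance σ_l² > 0 and log Y is Gaussian with mean μ_e and variance σ_e² > 0. Define the secrecy capacity C_s = max(log₂(1 + X) − log₂(1 + Y), 0). Then the probability of existence of non-zero secrecy capacity satisfies P[C_s > 0] = Q((μ_e − μ_l)/√(σ_l² + σ_e²)), where Q(x) = 1 − Φ(x) and Φ is the standard normal cumulative distribution function. -/
open MeasureTheory ProbabilityTheory Real Set

/-- The standard normal cumulative distribution function `Φ`. -/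
noncomputable def stdNormalCDF (x : ℝ) : ℝ :=
  ((gaussianReal 0 1) (Set.Iic x)).toReal

/-- The Gaussian Q-function: `Q(x) = 1 - Φ(x)`. -/
noncomputable def gaussQ (x : ℝ) : ℝ := 1 - stdNormalCDF x

open scoped NNReal ENNReal

lemma pdf_conv_pointwise (μ₁ μ₂ : ℝ) (v₁ v₂ : ℝ≥0) (h1 : v₁ ≠ 0) (h2 : v₂ ≠ 0) (t x : ℝ) :
    gaussianPDFReal μ₁ v₁ x * gaussianPDFReal μ₂ v₂ (t - x)
      = gaussianPDFReal (μ₁ + μ₂) (v₁ + v₂) t *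
        gaussianPDFReal (((v₁ : ℝ) * (t - μ₂) + (v₂ : ℝ) * μ₁) / ((v₁ : ℝ) + (v₂ : ℝ)))
          (v₁ * v₂ / (v₁ + v₂)) x := by
  have ha : (0:ℝ) < v₁ := lt_of_le_of_ne v₁.coe_nonneg (by exact_mod_cast (Ne.symm h1))
  have hb : (0:ℝ) < v₂ := lt_of_le_of_ne v₂.coe_nonneg (by exact_mod_cast (Ne.symm h2))
  set a : ℝ := (v₁ : ℝ)
  set b : ℝ := (v₂ : ℝ)
  have hab : (0:ℝ) < a + b := by positivity
  have hw : ((v₁ * v₂ / (v₁ + v₂) : ℝ≥0) : ℝ) = a * b / (a + b) := by push_cast; rfl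
  have hvab : ((v₁ + v₂ : ℝ≥0) : ℝ) = a + b := by push_cast; rfl
  simp only [gaussianPDFReal, hw, hvab]
  rw [mul_mul_mul_comm, ← Real.exp_add, mul_mul_mul_comm, ← Real.exp_add]
  have hpi : (0:ℝ) < π := Real.pi_pos
  congr 1
  · rw [← mul_inv, ← mul_inv, ← Real.sqrt_mul (by positivity), ← Real.sqrt_mul (by positivity)]
    congr 1
    field_simp
    ring
  · congr 1
    field_simp
    ring

lemma gaussianReal_map_add' (μ₁ μ₂ : ℝ) (v₁ v₂ : ℝ≥0) (h1 : v₁ ≠ 0) (h2 : v₂ ≠ 0) :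
    Measure.map (fun p : ℝ × ℝ => p.1 + p.2) ((gaussianReal μ₁ v₁).prod (gaussianReal μ₂ v₂))
      = gaussianReal (μ₁ + μ₂) (v₁ + v₂) := by
  have h12 : v₁ + v₂ ≠ 0 := by simp [h1]
  have hwne : v₁ * v₂ / (v₁ + v₂) ≠ 0 := by
    refine div_ne_zero (mul_ne_zero h1 h2) h12
  ext s hs
  rw [Measure.map_apply (show Measurable (fun p : ℝ × ℝ => p.1 + p.2) from measurable_fst.add measurable_snd) hs]
  rw [Measure.prod_apply (show MeasurableSet ((fun p : ℝ × ℝ => p.1 + p.2) ⁻¹' s) from (measurable_fst.add measurable_snd) hs)]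
  set g : ℝ → ℝ≥0∞ := s.indicator 1 with hg
  have hgm : Measurable g := measurable_one.indicator hs
  have hslice : ∀ x : ℝ,
      gaussianReal μ₂ v₂ (Prod.mk x ⁻¹' ((fun p : ℝ × ℝ => p.1 + p.2) ⁻¹' s))
        = ∫⁻ y, g y * gaussianPDF μ₂ v₂ (y - x) := by
    intro x
    have hset : (Prod.mk x ⁻¹' ((fun p : ℝ × ℝ => p.1 + p.2) ⁻¹' s))
        = (fun y => x + y) ⁻¹' s := rfl
    rw [hset, gaussianReal_apply _ h2, ← lintegral_indicator (measurable_const_add x hs)]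
    have heq : ∀ y : ℝ, ((fun y => x + y) ⁻¹' s).indicator (gaussianPDF μ₂ v₂) y
        = (fun y => g y * gaussianPDF μ₂ v₂ (y - x)) (y + x) := by
      intro y
      simp only [hg, add_sub_cancel_right]
      by_cases hy : x + y ∈ s
      · rw [Set.indicator_of_mem (by exact hy), Set.indicator_of_mem (by rwa [add_comm] at hy),
          Pi.one_apply, one_mul]
      · rw [Set.indicator_of_notMem (by exact hy),
          Set.indicator_of_notMem (by rwa [add_comm] at hy), zero_mul]
    calc ∫⁻ y, ((fun y => x + y) ⁻¹' s).indicator (gaussianPDF μ₂ v₂) y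
        = ∫⁻ y, (fun y => g y * gaussianPDF μ₂ v₂ (y - x)) (y + x) := by
          simp_rw [heq]
      _ = ∫⁻ y, g y * gaussianPDF μ₂ v₂ (y - x) :=
          lintegral_add_right_eq_self (fun y => g y * gaussianPDF μ₂ v₂ (y - x)) x
  simp_rw [hslice]
  rw [gaussianReal_of_var_ne_zero _ h1,
    lintegral_withDensity_eq_lintegral_mul _ (measurable_gaussianPDF _ _)
      (Measurable.lintegral_prod_right' (f := fun q : ℝ × ℝ => g q.2 * gaussianPDF μ₂ v₂ (q.2 - q.1))
        ((hgm.comp measurable_snd).mul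
          ((measurable_gaussianPDF μ₂ v₂).comp (measurable_snd.sub measurable_fst))))]
  have hpdfne : ∀ (μ : ℝ) (v : ℝ≥0) (x : ℝ), gaussianPDF μ v x ≠ ⊤ := fun _ _ _ =>
    ENNReal.ofReal_ne_top
  have hgne : ∀ y, g y ≠ ⊤ := by
    intro y
    rw [hg]
    by_cases hy : y ∈ s
    · simp [Set.indicator_of_mem hy]
    · simp [Set.indicator_of_notMem hy]
  calc ∫⁻ x, gaussianPDF μ₁ v₁ x * ∫⁻ y, g y * gaussianPDF μ₂ v₂ (y - x)
      = ∫⁻ x, ∫⁻ y, gaussianPDF μ₁ v₁ x * (g y * gaussianPDF μ₂ v₂ (y - x)) := by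
        simp_rw [lintegral_const_mul' _ _ (hpdfne μ₁ v₁ _)]
    _ = ∫⁻ y, ∫⁻ x, gaussianPDF μ₁ v₁ x * (g y * gaussianPDF μ₂ v₂ (y - x)) := by
        refine lintegral_lintegral_swap ?_
        exact (((measurable_gaussianPDF μ₁ v₁).comp measurable_fst).mul
          ((hgm.comp measurable_snd).mul
            ((measurable_gaussianPDF μ₂ v₂).comp (measurable_snd.sub measurable_fst)))).aemeasurable
    _ = ∫⁻ y, g y * ∫⁻ x, gaussianPDF μ₁ v₁ x * gaussianPDF μ₂ v₂ (y - x) := by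
        congr 1
        ext y
        rw [← lintegral_const_mul' _ _ (hgne y)]
        simp_rw [mul_left_comm]
    _ = ∫⁻ y, g y * gaussianPDF (μ₁ + μ₂) (v₁ + v₂) y := by
        congr 1
        ext y
        congr 1
        have : ∀ x : ℝ, gaussianPDF μ₁ v₁ x * gaussianPDF μ₂ v₂ (y - x)
            = gaussianPDF (μ₁ + μ₂) (v₁ + v₂) y *
              ENNReal.ofReal (gaussianPDFReal
                (((v₁ : ℝ) * (y - μ₂) + (v₂ : ℝ) * μ₁) / ((v₁ : ℝ) + (v₂ : ℝ)))
                (v₁ * v₂ / (v₁ + v₂)) x) := by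
          intro x
          rw [gaussianPDF, gaussianPDF, gaussianPDF,
            ← ENNReal.ofReal_mul (gaussianPDFReal_nonneg _ _ _),
            pdf_conv_pointwise μ₁ μ₂ v₁ v₂ h1 h2 y x,
            ENNReal.ofReal_mul (gaussianPDFReal_nonneg _ _ _)]
        simp_rw [this]
        rw [lintegral_const_mul' _ _ (hpdfne _ _ _),
          lintegral_gaussianPDFReal_eq_one _ hwne, mul_one]
    _ = gaussianReal (μ₁ + μ₂) (v₁ + v₂) s := by
        rw [gaussianReal_apply _ h12, ← lintegral_indicator hs]
        congr 1
        ext y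
        rw [hg]
        by_cases hy : y ∈ s
        · rw [Set.indicator_of_mem hy, Set.indicator_of_mem hy, Pi.one_apply, one_mul]
        · rw [Set.indicator_of_notMem hy, Set.indicator_of_notMem hy, zero_mul]

lemma indepFun_gaussian_add {Ω : Type*} [MeasurableSpace Ω] (P : Measure Ω)
    [IsProbabilityMeasure P] (U V : Ω → ℝ) (hU : Measurable U) (hV : Measurable V)
    (h : IndepFun U V P) (μ₁ μ₂ : ℝ) (v₁ v₂ : ℝ≥0) (h1 : v₁ ≠ 0) (h2 : v₂ ≠ 0)
    (hU' : Measure.map U P = gaussianReal μ₁ v₁) (hV' : Measure.map V P = gaussianReal μ₂ v₂) :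
    Measure.map (fun ω => U ω + V ω) P = gaussianReal (μ₁ + μ₂) (v₁ + v₂) := by
  have hpair := (indepFun_iff_map_prod_eq_prod_map_map hU.aemeasurable hV.aemeasurable).mp h
  have hcomp : (fun ω => U ω + V ω)
      = (fun p : ℝ × ℝ => p.1 + p.2) ∘ (fun ω => (U ω, V ω)) := rfl
  rw [hcomp, ← Measure.map_map (show Measurable (fun p : ℝ × ℝ => p.1 + p.2) from measurable_fst.add measurable_snd) (hU.prodMk hV), hpair,
    hU', hV', gaussianReal_map_add' μ₁ μ₂ v₁ v₂ h1 h2]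

/-- If `X` and `Y` are independent positive random variables with `log X ~ N(μl, σl²)` and
`log Y ~ N(μe, σe²)`, and `Cs = max(log₂(1+X) - log₂(1+Y), 0)` is the secrecy capacity,
then the probability of non-zero secrecy capacity is `Q((μe - μl)/√(σl² + σe²))`. -/
theorem nonzero_secrecy_capacity_prob
    {Ω : Type*} [MeasurableSpace Ω] (P : Measure Ω) [IsProbabilityMeasure P]
    (X Y : Ω → ℝ) (hX : Measurable X) (hY : Measurable Y)
    (hXpos : ∀ ω, 0 < X ω) (hYpos : ∀ ω, 0 < Y ω)
    (hindep : IndepFun X Y P)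
    (μl μe σl σe : ℝ) (hσl : 0 < σl) (hσe : 0 < σe)
    (hlawX : Measure.map (fun ω => Real.log (X ω)) P
      = gaussianReal μl ⟨σl ^ 2, sq_nonneg σl⟩)
    (hlawY : Measure.map (fun ω => Real.log (Y ω)) P
      = gaussianReal μe ⟨σe ^ 2, sq_nonneg σe⟩)
    (Cs : Ω → ℝ)
    (hCs : ∀ ω, Cs ω = max (Real.logb 2 (1 + X ω) - Real.logb 2 (1 + Y ω)) 0) :
    (P {ω | 0 < Cs ω}).toReal
      = gaussQ ((μe - μl) / Real.sqrt (σl ^ 2 + σe ^ 2)) := by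
  set vl : ℝ≥0 := ⟨σl ^ 2, sq_nonneg σl⟩ with hvl
  set ve : ℝ≥0 := ⟨σe ^ 2, sq_nonneg σe⟩ with hve
  have hvl0 : vl ≠ 0 := by
    intro h
    have := congrArg (NNReal.toReal) h
    simp only [hvl, NNReal.coe_mk, NNReal.coe_zero] at this
    change σl ^ 2 = 0 at this
    nlinarith
  have hve0 : ve ≠ 0 := by
    intro h
    have := congrArg (NNReal.toReal) h
    simp only [hve, NNReal.coe_mk, NNReal.coe_zero] at this
    change σe ^ 2 = 0 at this
    nlinarith
  set U : Ω → ℝ := fun ω => Real.log (X ω) with hU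
  set V : Ω → ℝ := fun ω => -(Real.log (Y ω)) with hV
  have hUm : Measurable U := Real.measurable_log.comp hX
  have hVm : Measurable V := (Real.measurable_log.comp hY).neg
  have hUV : IndepFun U V P := hindep.comp Real.measurable_log Real.measurable_log.neg
  have hlawV : Measure.map V P = gaussianReal (-μe) ve := by
    have hcomp : V = (fun x : ℝ => (-1 : ℝ) * x) ∘ (fun ω => Real.log (Y ω)) := by
      funext ω; simp [hV]
    rw [hcomp, ← Measure.map_map (show Measurable fun x : ℝ => (-1 : ℝ) * x by fun_prop)
      (show Measurable fun ω => Real.log (Y ω) from Real.measurable_log.comp hY), hlawY, gaussianReal_map_const_mul]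
    congr 1
    · ring
    · ext
      push_cast
      norm_num
  have hlawD : Measure.map (fun ω => U ω + V ω) P = gaussianReal (μl + -μe) (vl + ve) :=
    indepFun_gaussian_add P U V hUm hVm hUV μl (-μe) vl ve hvl0 hve0 hlawX hlawV
  have hset : {ω | 0 < Cs ω} = (fun ω => U ω + V ω) ⁻¹' Ioi 0 := by
    ext ω
    simp only [Set.mem_setOf_eq, Set.mem_preimage, Set.mem_Ioi, hCs ω, lt_max_iff,
      lt_self_iff_false, or_false, sub_pos, hU, hV]
    rw [Real.logb_lt_logb_iff (b := 2) one_lt_two (by linarith [hYpos ω]) (by linarith [hXpos ω])]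
    rw [_root_.add_lt_add_iff_left, ← Real.log_lt_log_iff (hYpos ω) (hXpos ω)]
    constructor <;> intro h <;> linarith
  set σ : ℝ := Real.sqrt (σl ^ 2 + σe ^ 2) with hσdef
  have hσ : 0 < σ := Real.sqrt_pos.mpr (by positivity)
  have hσsq : σ ^ 2 = σl ^ 2 + σe ^ 2 := Real.sq_sqrt (by positivity)
  have hstd : gaussianReal (μl + -μe) (vl + ve)
      = Measure.map (fun x => σ * x + (μl + -μe)) (gaussianReal 0 1) := by
    have h1 : Measure.map (fun x : ℝ => σ * x) (gaussianReal 0 1)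
        = gaussianReal 0 (vl + ve) := by
      rw [show (fun x : ℝ => σ * x) = (σ * ·) from rfl, gaussianReal_map_const_mul]
      congr 1
      · ring
      · ext
        push_cast
        simp only [hσsq, hvl, hve, NNReal.coe_add, NNReal.coe_mk, mul_one]
        rfl
    have h2 : (fun x : ℝ => σ * x + (μl + -μe))
        = (· + (μl + -μe)) ∘ (fun x : ℝ => σ * x) := rfl
    rw [h2, ← Measure.map_map (measurable_add_const _)
      (show Measurable fun x : ℝ => σ * x by fun_prop), h1,
      gaussianReal_map_add_const, zero_add]
  have hpre : (fun x : ℝ => σ * x + (μl + -μe)) ⁻¹' Ioi 0 = Ioi ((μe - μl) / σ) := by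
    ext x
    simp only [Set.mem_preimage, Set.mem_Ioi]
    rw [div_lt_iff₀ hσ]
    constructor <;> intro h <;> nlinarith
  rw [hset, ← Measure.map_apply (show Measurable fun ω => U ω + V ω from hUm.add hVm) measurableSet_Ioi, hlawD, hstd,
    Measure.map_apply (show Measurable fun x : ℝ => σ * x + (μl + -μe) by fun_prop)
      measurableSet_Ioi, hpre,
    ← Set.compl_Iic, measure_compl measurableSet_Iic (measure_ne_top _ _),
    measure_univ, ENNReal.toReal_sub_of_le prob_le_one ENNReal.one_ne_top,
    ENNReal.toReal_one]
  rfl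
end

section
/- Let X and Y be independent positive random variables with log X ~ N(μ_l, σ_l²) and log Y ~ N(μ_e, σ_e²), σ_l, σ_e > 0, let f_e denote the lognormal density of Y, and fix R_s > 0 with ε = 2^{R_s}. Then the secrecy outage probability admits the exact integral representation P[max(log₂(1+X) − log₂(1+Y), 0) < R_s] = ∫₀^∞ f_e(γ) · (1/2)·Erfc((μ_l − log(ε·(1 + γ) − 1))/(√2 σ_l)) dγ. -/
open MeasureTheory ProbabilityTheory Real Set

/-- The error function `Erf(x) = (2/√π) ∫₀ˣ e^{-t²} dt`. -/
noncomputable def erf (x : ℝ) : ℝ :=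
  (2 / Real.sqrt π) * ∫ t in (0:ℝ)..x, Real.exp (-t ^ 2)

/-- The complementary error function `Erfc(x) = 1 - Erf(x)`. -/
noncomputable def erfc (x : ℝ) : ℝ := 1 - erf x

/-- The lognormal density with parameters `(μ, σ²)`. -/
noncomputable def lognormalPDF (μ σ γ : ℝ) : ℝ :=
  (1 / (γ * σ * Real.sqrt (2 * π))) * Real.exp (-(Real.log γ - μ) ^ 2 / (2 * σ ^ 2))

lemma exp_neg_sq_integrable : Integrable (fun t : ℝ => Real.exp (-t ^ 2)) := by
  have := integrable_exp_neg_mul_sq (b := 1) one_pos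
  simpa using this

lemma erf_neg (x : ℝ) : erf (-x) = - erf x := by
  have h := intervalIntegral.integral_comp_neg (a := (0:ℝ)) (b := -x)
    (f := fun t => Real.exp (-t ^ 2))
  simp only [neg_sq, neg_neg, neg_zero] at h
  unfold erf
  rw [h, intervalIntegral.integral_symm]
  ring

lemma integral_exp_neg_sq_Iic (s : ℝ) :
    ∫ t in Iic s, Real.exp (-t ^ 2) = Real.sqrt π / 2 * (1 + erf s) := by
  have hint : Integrable (fun t : ℝ => Real.exp (-t ^ 2)) := exp_neg_sq_integrable
  have h0 : ∫ t in Iic (0:ℝ), Real.exp (-t ^ 2) = Real.sqrt π / 2 := by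
    have hneg := integral_comp_neg_Iic (c := (0:ℝ)) (f := fun t => Real.exp (-t ^ 2))
    simp only [neg_sq, neg_zero] at hneg
    rw [hneg]
    have hg := integral_gaussian_Ioi 1
    simp only [neg_mul, one_mul, Real.sqrt_one, div_one] at hg
    simpa using hg
  have hsub := intervalIntegral.integral_Iic_sub_Iic (μ := volume)
    (f := fun t : ℝ => Real.exp (-t ^ 2)) hint.integrableOn hint.integrableOn (a := 0) (b := s)
  have hsqrt : Real.sqrt π ≠ 0 := (Real.sqrt_pos.mpr pi_pos).ne'
  have herf : ∫ t in (0:ℝ)..s, Real.exp (-t ^ 2) = Real.sqrt π / 2 * erf s := by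
    unfold erf
    field_simp
  rw [h0, herf] at hsub
  linarith

lemma gaussianReal_Iio (μl : ℝ) {σ : ℝ} (hσ : 0 < σ) (t : ℝ) :
    ((gaussianReal μl ⟨σ ^ 2, sq_nonneg σ⟩) (Iio t)).toReal
      = 1 / 2 * erfc ((μl - t) / (Real.sqrt 2 * σ)) := by
  have hσ2 : (0:ℝ) < σ ^ 2 := by positivity
  have hv : (⟨σ ^ 2, sq_nonneg σ⟩ : NNReal) ≠ 0 := by
    intro h; exact hσ2.ne' (congrArg Subtype.val h)
  set c : ℝ := Real.sqrt 2 * σ with hc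
  have hcpos : 0 < c := by positivity
  set s : ℝ := (t - μl) / c with hs
  have hcs : c * s = t - μl := by rw [hs]; field_simp
  rw [gaussianReal_apply_eq_integral _ hv,
    ENNReal.toReal_ofReal (by exact (setIntegral_nonneg measurableSet_Iio
      (fun x _ => gaussianPDFReal_nonneg _ _ x)))]
  rw [setIntegral_congr_set Iio_ae_eq_Iic]
  have himg : (fun u : ℝ => μl + c * u) '' Iic s = Iic t := by
    ext x
    constructor
    · rintro ⟨u, hu, rfl⟩
      have : c * u ≤ c * s := mul_le_mul_of_nonneg_left hu hcpos.le
      simp only [mem_Iic]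
      linarith
    · intro hx
      refine ⟨(x - μl) / c, ?_, ?_⟩
      · rw [mem_Iic, hs]
        have : x - μl ≤ t - μl := by have := mem_Iic.mp hx; linarith
        gcongr
      · field_simp; ring
  rw [← himg, integral_image_eq_integral_abs_deriv_smul measurableSet_Iic
    (fun x _ => by
      simpa using (((hasDerivAt_id x).const_mul c).const_add μl).hasDerivWithinAt)
    (fun a _ b _ h => mul_left_cancel₀ hcpos.ne' (add_left_cancel h))]
  have h2 : (Real.sqrt 2) ^ 2 = 2 := Real.sq_sqrt (by norm_num)
  have hc2 : c ^ 2 = 2 * σ ^ 2 := by rw [hc, mul_pow, h2]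
  have hsqrt2 : Real.sqrt (2 * π * σ ^ 2) = Real.sqrt 2 * Real.sqrt π * σ := by
    rw [Real.sqrt_mul (by positivity), Real.sqrt_mul (by norm_num), Real.sqrt_sq hσ.le]
  have hsqrtpi : Real.sqrt π ≠ 0 := (Real.sqrt_pos.mpr pi_pos).ne'
  have hsqrt2' : Real.sqrt 2 ≠ 0 := by positivity
  have hpt : ∀ x : ℝ, |c| • gaussianPDFReal μl ⟨σ ^ 2, sq_nonneg σ⟩ (μl + c * x)
      = (Real.sqrt π)⁻¹ * Real.exp (-x ^ 2) := by
    intro x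
    rw [smul_eq_mul, abs_of_pos hcpos]; simp only [gaussianPDFReal]
    erw [NNReal.coe_mk]
    have harg : -(μl + c * x - μl) ^ 2 / (2 * σ ^ 2) = -x ^ 2 := by
      have : (μl + c * x - μl) ^ 2 = c ^ 2 * x ^ 2 := by ring
      rw [this, hc2]
      field_simp
    rw [harg, hsqrt2]
    field_simp [hc]
    ring
  simp only [hpt]
  rw [integral_const_mul, integral_exp_neg_sq_Iic]
  have hmt : (μl - t) / c = -s := by rw [hs]; ring
  rw [hmt, erfc, erf_neg]
  field_simp
  ring

lemma erf_continuous : Continuous erf := by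
  apply continuous_const.mul
  exact intervalIntegral.continuous_primitive
    (fun a b => exp_neg_sq_integrable.intervalIntegrable) 0


/-- For independent lognormal SIRs `X`, `Y` with `log X ~ N(μl, σl²)`, `log Y ~ N(μe, σe²)`,
lognormal density `f_e` of `Y`, and secrecy rate `Rs > 0` with `ε = 2^{Rs}`, the secrecy
outage probability satisfies
`P[max(log₂(1+X) - log₂(1+Y), 0) < Rs]
  = ∫₀^∞ f_e(γ) · (1/2)·Erfc((μl - log(ε(1+γ) - 1))/(√2 σl)) dγ`. -/
theorem secrecy_outage_prob_integral
    {Ω : Type*} [MeasurableSpace Ω] (P : Measure Ω) [IsProbabilityMeasure P]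
    (X Y : Ω → ℝ) (hX : Measurable X) (hY : Measurable Y)
    (hXpos : ∀ ω, 0 < X ω) (hYpos : ∀ ω, 0 < Y ω)
    (hindep : IndepFun X Y P)
    (μl μe σl σe : ℝ) (hσl : 0 < σl) (hσe : 0 < σe)
    (hlawX : Measure.map (fun ω => Real.log (X ω)) P
      = gaussianReal μl ⟨σl ^ 2, sq_nonneg σl⟩)
    (hlawY : Measure.map (fun ω => Real.log (Y ω)) P
      = gaussianReal μe ⟨σe ^ 2, sq_nonneg σe⟩)
    (Rs : ℝ) (hRs : 0 < Rs) (ε : ℝ) (hε : ε = (2:ℝ) ^ Rs) :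
    (P {ω | max (Real.logb 2 (1 + X ω) - Real.logb 2 (1 + Y ω)) 0 < Rs}).toReal
      = ∫ γ in Set.Ioi (0:ℝ),
          lognormalPDF μe σe γ *
            ((1 / 2) * erfc ((μl - Real.log (ε * (1 + γ) - 1)) / (Real.sqrt 2 * σl))) := by
  have hε1 : (1:ℝ) < ε := by
    rw [hε]
    exact (Real.one_lt_rpow_iff_of_pos two_pos).mpr (Or.inl ⟨one_lt_two, hRs⟩)
  have herfc_cont : Continuous erfc := continuous_const.sub erf_continuous
  set φ : ℝ → ℝ := fun y =>
    1 / 2 * erfc ((μl - Real.log (ε * (1 + y) - 1)) / (Real.sqrt 2 * σl)) with hφ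
  have hφ_meas : Measurable φ := by
    apply Measurable.const_mul
    exact herfc_cont.measurable.comp
      ((measurable_const.sub (Real.measurable_log.comp
        ((measurable_const.mul (measurable_const.add measurable_id)).sub
          measurable_const))).div_const _)
  have hT : MeasurableSet {p : ℝ × ℝ | p.1 < ε * (1 + p.2) - 1} :=
    measurableSet_lt measurable_fst
      ((measurable_const.mul (measurable_const.add measurable_snd)).sub measurable_const)
  have hset : {ω | max (Real.logb 2 (1 + X ω) - Real.logb 2 (1 + Y ω)) 0 < Rs}
      = (fun ω => (X ω, Y ω)) ⁻¹' {p : ℝ × ℝ | p.1 < ε * (1 + p.2) - 1} := by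
    ext ω
    have h1 : (0:ℝ) < 1 + X ω := by linarith [hXpos ω]
    have h2 : (0:ℝ) < 1 + Y ω := by linarith [hYpos ω]
    simp only [mem_setOf_eq, mem_preimage, max_lt_iff]
    have key : Real.logb 2 (1 + X ω) - Real.logb 2 (1 + Y ω) < Rs
        ↔ X ω < ε * (1 + Y ω) - 1 := by
      rw [sub_lt_iff_lt_add, Real.logb_lt_iff_lt_rpow one_lt_two h1,
        Real.rpow_add two_pos, Real.rpow_logb two_pos (by norm_num) h2, ← hε]
      constructor <;> intro h <;> linarith
    rw [key]
    exact ⟨fun h => h.1, fun h => ⟨h, hRs⟩⟩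
  haveI : IsProbabilityMeasure (P.map X) := Measure.isProbabilityMeasure_map hX.aemeasurable
  haveI : IsProbabilityMeasure (P.map Y) := Measure.isProbabilityMeasure_map hY.aemeasurable
  have hjoint : P.map (fun ω => (X ω, Y ω)) = (P.map X).prod (P.map Y) :=
    (indepFun_iff_map_prod_eq_prod_map_map hX.aemeasurable hY.aemeasurable).mp hindep
  have hPS : P {ω | max (Real.logb 2 (1 + X ω) - Real.logb 2 (1 + Y ω)) 0 < Rs}
      = ∫⁻ y, (P.map X) (Iio (ε * (1 + y) - 1)) ∂(P.map Y) := by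
    rw [hset, ← Measure.map_apply (hX.prodMk hY) hT, hjoint, Measure.prod_apply_symm hT]
    rfl
  have hXlaw : ∀ t : ℝ, 0 < t →
      (P.map X) (Iio t) = gaussianReal μl ⟨σl ^ 2, sq_nonneg σl⟩ (Iio (Real.log t)) := by
    intro t ht
    rw [Measure.map_apply hX measurableSet_Iio, ← hlawX,
      Measure.map_apply hX.log measurableSet_Iio]
    congr 1
    ext ω
    simp only [mem_preimage, mem_Iio]
    exact (Real.log_lt_log_iff (hXpos ω) ht).symm
  have hae : ∀ᵐ y ∂(P.map Y), 0 < y := by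
    rw [ae_iff]
    have hset0 : {y : ℝ | ¬ 0 < y} = Iic 0 := by ext y; simp [not_lt]
    rw [hset0, Measure.map_apply hY measurableSet_Iic]
    have hempty : Y ⁻¹' Iic 0 = ∅ := by
      ext ω
      simp only [mem_preimage, mem_Iic, mem_empty_iff_false, iff_false, not_le]
      exact hYpos ω
    simp [hempty]
  have hmono : Measurable (fun y : ℝ => (P.map X) (Iio (ε * (1 + y) - 1))) := by
    have m1 : Measurable (fun t : ℝ => (P.map X) (Iio t)) :=
      Monotone.measurable (fun a b hab => measure_mono (Iio_subset_Iio hab))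
    exact m1.comp
      ((measurable_const.mul (measurable_const.add measurable_id)).sub measurable_const)
  rw [hPS, ← integral_toReal hmono.aemeasurable
    (Filter.Eventually.of_forall fun y => measure_lt_top _ _)]
  have hstep : ∫ y, ((P.map X) (Iio (ε * (1 + y) - 1))).toReal ∂(P.map Y)
      = ∫ y, φ y ∂(P.map Y) := by
    refine integral_congr_ae ?_
    filter_upwards [hae] with y hy
    have hg : 0 < ε * (1 + y) - 1 := by nlinarith
    rw [hXlaw _ hg, gaussianReal_Iio μl hσl]
  rw [hstep]
  -- transform the Y-expectation into a Lebesgue integral against the lognormal density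
  have hve : (⟨σe ^ 2, sq_nonneg σe⟩ : NNReal) ≠ 0 := by
    intro h; exact (pow_pos hσe 2).ne' (congrArg Subtype.val h)
  have hmapY : P.map Y = (gaussianReal μe ⟨σe ^ 2, sq_nonneg σe⟩).map Real.exp := by
    rw [← hlawY, Measure.map_map measurable_exp hY.log]
    congr 1
    funext ω
    exact (Real.exp_log (hYpos ω)).symm
  rw [hmapY, integral_map measurable_exp.aemeasurable hφ_meas.aestronglyMeasurable,
    gaussianReal_of_var_ne_zero _ hve]
  have hpdf : gaussianPDF μe ⟨σe ^ 2, sq_nonneg σe⟩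
      = fun x => ((gaussianPDFReal μe ⟨σe ^ 2, sq_nonneg σe⟩ x).toNNReal : ENNReal) := rfl
  rw [hpdf, integral_withDensity_eq_integral_smul
    (measurable_gaussianPDFReal μe ⟨σe ^ 2, sq_nonneg σe⟩).real_toNNReal]
  -- now handle the RHS via the exp-substitution
  have himg : Ioi (0:ℝ) = Real.exp '' univ := by rw [image_univ, Real.range_exp]
  rw [himg, integral_image_eq_integral_abs_deriv_smul MeasurableSet.univ
    (fun x _ => (Real.hasDerivAt_exp x).hasDerivWithinAt) Real.exp_injective.injOn
    (fun γ => lognormalPDF μe σe γ *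
      (1 / 2 * erfc ((μl - Real.log (ε * (1 + γ) - 1)) / (Real.sqrt 2 * σl)))),
    Measure.restrict_univ]
  refine integral_congr_ae (Filter.Eventually.of_forall fun u => ?_)
  have hexp : (0:ℝ) < Real.exp u := Real.exp_pos u
  have hsq : Real.sqrt (2 * π * σe ^ 2) = Real.sqrt (2 * π) * σe := by
    rw [Real.sqrt_mul (by positivity), Real.sqrt_sq hσe.le]
  simp only [NNReal.smul_def, smul_eq_mul, abs_of_pos hexp, hφ,
    Real.coe_toNNReal _ (gaussianPDFReal_nonneg _ _ _)]
  simp only [gaussianPDFReal]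
  erw [NNReal.coe_mk]; simp only [lognormalPDF, Real.log_exp]
  rw [max_eq_left (by positivity)]
  change (√(2 * π * σe ^ 2))⁻¹ * rexp (-(u - μe) ^ 2 / (2 * σe ^ 2)) * _ = _
  rw [hsq]
  have h2pi : Real.sqrt (2 * π) ≠ 0 := by positivity
  field_simp
end

section
/- Let m > 0 and θ > 0, and let W be a Gamma-distributed random variable with shape m and rate θ (density f(x) = θ^m x^{m−1} e^{−θx}/Γ(m) for x > 0). Then E[log W] = ψ(m) − log θ, where ψ(m) is the digamma function, i.e., ψ(m) = d/dm log Γ(m), the derivative of the logarithm of the Gamma function evaluated at m. -/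
open MeasureTheory ProbabilityTheory Real Set
open scoped ENNReal NNReal

section AuxGamma

open Filter Asymptotics
open scoped Topology NNReal

private lemma aux_mellin_exp (θ : ℝ) (hθ : 0 < θ) {x : ℝ} (hx : 0 < x) :
    mellin (fun t : ℝ => (Real.exp (-(θ * t)) : ℂ)) (x : ℂ)
      = ((1 / θ) ^ x * Real.Gamma x : ℝ) := by
  rw [mellin, ← integral_rpow_mul_exp_neg_mul_Ioi hx hθ]
  rw [show ((↑(∫ t : ℝ in Ioi 0, t ^ (x - 1) * rexp (-(θ * t))) : ℂ))
      = ∫ t : ℝ in Ioi 0, ((t ^ (x - 1) * rexp (-(θ * t)) : ℝ) : ℂ) from integral_ofReal.symm]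
  refine setIntegral_congr_fun measurableSet_Ioi (fun t ht => ?_)
  simp only [smul_eq_mul, Complex.ofReal_mul, Complex.ofReal_exp]
  rw [Complex.ofReal_cpow (le_of_lt ht)]
  norm_num

private lemma aux_mellin_deriv (θ : ℝ) (hθ : 0 < θ) {m : ℝ} (hm : 0 < m) :
    MellinConvergent (fun t : ℝ => Real.log t • (Real.exp (-(θ * t)) : ℂ)) (m : ℂ) ∧
    HasDerivAt (mellin (fun t : ℝ => (Real.exp (-(θ * t)) : ℂ)))
      (mellin (fun t : ℝ => Real.log t • (Real.exp (-(θ * t)) : ℂ)) (m : ℂ)) (m : ℂ) := by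
  apply mellin_hasDerivAt_of_isBigO_rpow (a := m + 1) (b := 0)
  · refine (Continuous.continuousOn ?_).locallyIntegrableOn measurableSet_Ioi
    exact Complex.continuous_ofReal.comp (Real.continuous_exp.comp
      (continuous_const.mul continuous_id).neg)
  · rw [← Asymptotics.isBigO_norm_left]
    simp_rw [Complex.norm_real,
      Asymptotics.isBigO_norm_left]
    simpa only [neg_mul] using (isLittleO_exp_neg_mul_rpow_atTop hθ _).isBigO
  · simpa using hm.trans (lt_add_one m)
  · simp_rw [neg_zero, Real.rpow_zero]
    refine Asymptotics.isBigO_const_of_tendsto (?_ : Tendsto _ _ (𝓝 (1 : ℂ))) one_ne_zero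
    rw [show (1 : ℂ) = Real.exp (-(θ * 0)) by simp]
    exact (Complex.continuous_ofReal.comp (Real.continuous_exp.comp
      (continuous_const.mul continuous_id).neg)).continuousWithinAt
  · simpa using hm

private lemma aux_log_integral (θ : ℝ) (hθ : 0 < θ) {m : ℝ} (hm : 0 < m) :
    IntegrableOn (fun t : ℝ => t ^ (m - 1) * (Real.log t * rexp (-(θ * t)))) (Ioi 0) ∧
    ∫ t in Ioi (0:ℝ), t ^ (m - 1) * (Real.log t * rexp (-(θ * t)))
      = (1 / θ) ^ m * Real.log (1 / θ) * Real.Gamma m + (1 / θ) ^ m * deriv Real.Gamma m := by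
  obtain ⟨hconv, hd⟩ := aux_mellin_deriv θ hθ hm
  have hs : ∀ n : ℕ, m ≠ -n := by
    intro n h
    have : (0:ℝ) ≤ n := Nat.cast_nonneg n
    linarith [h ▸ hm]
  have hcongr : EqOn (fun t : ℝ => (t:ℂ) ^ ((m:ℂ) - 1) • (Real.log t • (rexp (-(θ * t)) : ℂ)))
      (fun t : ℝ => ((t ^ (m - 1) * (Real.log t * rexp (-(θ * t))) : ℝ) : ℂ)) (Ioi 0) := by
    intro t ht
    simp only [smul_eq_mul]
    rw [show ((m:ℂ) - 1) = ((m - 1 : ℝ) : ℂ) by push_cast; ring,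
      ← Complex.ofReal_cpow (le_of_lt ht)]
    rw [Complex.real_smul, Complex.ofReal_mul, Complex.ofReal_mul]
  have hI : IntegrableOn
      (fun t : ℝ => ((t ^ (m - 1) * (Real.log t * rexp (-(θ * t))) : ℝ) : ℂ)) (Ioi 0) :=
    hconv.congr_fun hcongr measurableSet_Ioi
  have hIre : IntegrableOn (fun t : ℝ => t ^ (m - 1) * (Real.log t * rexp (-(θ * t)))) (Ioi 0) := by
    have h := hI.re
    simp only [RCLike.re_to_complex, Complex.ofReal_re] at h
    exact h
  refine ⟨hIre, ?_⟩
  have hval : mellin (fun t : ℝ => Real.log t • (rexp (-(θ * t)) : ℂ)) (m : ℂ)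
      = ((∫ t in Ioi (0:ℝ), t ^ (m - 1) * (Real.log t * rexp (-(θ * t))) : ℝ) : ℂ) := by
    rw [mellin, show ((↑(∫ t in Ioi (0:ℝ), t ^ (m - 1) * (Real.log t * rexp (-(θ * t)))) : ℂ))
      = ∫ t in Ioi (0:ℝ), ((t ^ (m - 1) * (Real.log t * rexp (-(θ * t))) : ℝ) : ℂ)
        from integral_ofReal.symm]
    exact setIntegral_congr_fun measurableSet_Ioi hcongr
  have hre := hd.real_of_complex
  rw [hval] at hre
  simp only [Complex.ofReal_re] at hre
  have heq : (fun x : ℝ => (1 / θ) ^ x * Real.Gamma x)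
      =ᶠ[𝓝 m] fun x : ℝ => ((mellin (fun t : ℝ => (rexp (-(θ * t)) : ℂ)) (x : ℂ)).re) := by
    filter_upwards [eventually_gt_nhds hm] with x hx
    rw [aux_mellin_exp θ hθ hx, Complex.ofReal_re]
  have hg : HasDerivAt (fun x : ℝ => (1 / θ) ^ x * Real.Gamma x)
      (∫ t in Ioi (0:ℝ), t ^ (m - 1) * (Real.log t * rexp (-(θ * t)))) m :=
    hre.congr_of_eventuallyEq heq
  have hg' : HasDerivAt (fun x : ℝ => (1 / θ) ^ x * Real.Gamma x)
      ((1 / θ) ^ m * Real.log (1 / θ) * Real.Gamma m + (1 / θ) ^ m * deriv Real.Gamma m) m :=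
    ((Real.hasStrictDerivAt_const_rpow (by positivity) m).hasDerivAt).mul
      (Real.differentiableAt_Gamma hs).hasDerivAt
  exact hg.unique hg'

end AuxGamma

/-- The digamma function `ψ = (log Γ)'`. -/
noncomputable def digamma (x : ℝ) : ℝ :=
  deriv (fun y => Real.log (Real.Gamma y)) x


/-- If `W` is Gamma-distributed with shape `m > 0` and rate `θ > 0`, then
`E[log W] = ψ(m) - log θ`, where `ψ` is the digamma function. -/
theorem gamma_expectation_log
    {Ω : Type*} [MeasurableSpace Ω] (P : Measure Ω) [IsProbabilityMeasure P]
    (W : Ω → ℝ) (hW : Measurable W)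
    (m θ : ℝ) (hm : 0 < m) (hθ : 0 < θ)
    (hlaw : Measure.map W P = gammaMeasure m θ) :
    (∫ ω, Real.log (W ω) ∂P) = digamma m - Real.log θ := by
  have hs : ∀ n : ℕ, m ≠ -n := by
    intro n h
    have : (0:ℝ) ≤ n := Nat.cast_nonneg n
    linarith [h ▸ hm]
  have hΓpos := Real.Gamma_pos_of_pos hm
  have hdig : digamma m = deriv Real.Gamma m / Real.Gamma m :=
    (((Real.differentiableAt_Gamma hs).hasDerivAt).log hΓpos.ne').deriv
  have h1 : (∫ ω, Real.log (W ω) ∂P) = ∫ x, Real.log x ∂(gammaMeasure m θ) := by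
    rw [← hlaw, integral_map hW.aemeasurable Real.measurable_log.aestronglyMeasurable]
  rw [h1]
  set f : ℝ → ℝ≥0 := fun x => (gammaPDFReal m θ x).toNNReal with hf
  have hfm : Measurable f := (measurable_gammaPDFReal m θ).real_toNNReal
  have h2 : gammaMeasure m θ = volume.withDensity (fun x => (f x : ℝ≥0∞)) := rfl
  rw [h2, integral_withDensity_eq_integral_smul hfm]
  have h3 : (fun x => f x • Real.log x)
      = fun x => gammaPDFReal m θ x * Real.log x := by
    funext x
    rw [NNReal.smul_def, hf, Real.coe_toNNReal _ (gammaPDFReal_nonneg hm hθ x), smul_eq_mul]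
  rw [h3]
  have hzero : ∀ x : ℝ, x ∉ Ioi (0:ℝ) → gammaPDFReal m θ x * Real.log x = 0 := by
    intro x hx
    rw [mem_Ioi, not_lt] at hx
    rcases lt_or_eq_of_le hx with h | h
    · rw [gammaPDFReal, if_neg (not_le.mpr h), zero_mul]
    · subst h; rw [Real.log_zero, mul_zero]
  rw [← setIntegral_eq_integral_of_forall_compl_eq_zero hzero]
  have h4 : ∫ x in Ioi (0:ℝ), gammaPDFReal m θ x * Real.log x
      = ∫ x in Ioi (0:ℝ), θ ^ m / Real.Gamma m * (x ^ (m - 1) * (Real.log x * rexp (-(θ * x)))) := by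
    refine setIntegral_congr_fun measurableSet_Ioi (fun x hx => ?_)
    rw [gammaPDFReal, if_pos (le_of_lt hx)]
    ring
  rw [h4, integral_const_mul, (aux_log_integral θ hθ hm).2, hdig]
  have key : θ ^ m * (1 / θ) ^ m = 1 := by
    rw [← Real.mul_rpow hθ.le (by positivity), mul_one_div, div_self hθ.ne', Real.one_rpow]
  have hlog : Real.log (1 / θ) = -Real.log θ := by
    rw [one_div, Real.log_inv]
  rw [hlog]
  field_simp
  linear_combination (deriv Real.Gamma m - Real.Gamma m * Real.log θ) * key
end

section
/- Let m > 0 and θ > 0, and let W be a Gamma-distributed random variable with shape m and rate θ (density f(x) = θ^m x^{m−1} e^{−θx}/Γ(m) for x > 0). Then the variance of log W equals the generalized (Hurwitz) zeta value ζ(2, m) = Σ_{n=0}^{∞} 1/(m + n)²; in particular it does not depend on θ. -/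
set_option maxHeartbeats 1000000

open MeasureTheory ProbabilityTheory Real Set

namespace GammaVarAux

open Filter Topology
open scoped ENNReal NNReal

lemma integrableOn_rpow_exp {θ q : ℝ} (hθ : 0 < θ) (hq : (-1:ℝ) < q) :
    IntegrableOn (fun x => x ^ q * exp (-(θ * x))) (Ioi (0:ℝ)) := by
  have h1 : IntegrableOn (fun x : ℝ => exp (-x) * x ^ ((q+1) - 1)) (Ioi (0:ℝ)) :=
    Real.GammaIntegral_convergent (by linarith)
  have h2 : IntegrableOn (fun x : ℝ => exp (-(θ*x)) * (θ*x) ^ ((q+1) - 1)) (Ioi (0:ℝ)) := by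
    have := (integrableOn_Ioi_comp_mul_left_iff
      (fun x : ℝ => exp (-x) * x ^ ((q+1) - 1)) 0 hθ).mpr (by simpa using h1)
    simpa using this
  have h3 : IntegrableOn (fun x : ℝ => θ ^ q * (x ^ q * exp (-(θ*x)))) (Ioi (0:ℝ)) := by
    refine h2.congr_fun (fun x hx => ?_) measurableSet_Ioi
    rw [add_sub_cancel_right]; beta_reduce; rw [Real.mul_rpow hθ.le (le_of_lt hx)]
    ring
  have h4 : IntegrableOn (fun x : ℝ => (θ ^ q)⁻¹ * (θ ^ q * (x ^ q * exp (-(θ*x)))))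
      (Ioi (0:ℝ)) := h3.const_mul (θ ^ q)⁻¹
  refine h4.congr_fun (fun x hx => ?_) measurableSet_Ioi
  have : θ ^ q ≠ 0 := (Real.rpow_pos_of_pos hθ q).ne'
  field_simp

lemma aesm_logpow {q : ℝ} {θ : ℝ} (k : ℕ) (s : Set ℝ) :
    AEStronglyMeasurable (fun x : ℝ => log x ^ k * (x ^ q * exp (-(θ * x))))
      (volume.restrict s) := by
  apply Measurable.aestronglyMeasurable
  exact (Real.measurable_log.pow_const k).mul
    (((by fun_prop : Measurable (fun x : ℝ => x ^ q))).mul ((measurable_id.const_mul θ).neg.exp))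

lemma integrableOn_logpow_rpow_exp {θ q : ℝ} (hθ : 0 < θ) (hq : (-1:ℝ) < q) (k : ℕ) :
    IntegrableOn (fun x => log x ^ k * (x ^ q * exp (-(θ * x)))) (Ioi (0:ℝ)) := by
  have hsplit : Ioc (0:ℝ) 1 ∪ Ioi (1:ℝ) = Ioi 0 := Ioc_union_Ioi_eq_Ioi zero_le_one
  rw [← hsplit]
  apply IntegrableOn.union
  · -- on (0,1]
    set δ : ℝ := (q+1)/(k+1) with hδdef
    have hk0 : (0:ℝ) ≤ (k:ℝ) := Nat.cast_nonneg k
    have hδ : 0 < δ := div_pos (by linarith) (by positivity)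
    have hexp : (-1:ℝ) < q - k * δ := by
      have h : q - k * δ = (q - k)/(k+1) := by rw [hδdef]; field_simp; ring
      rw [h, lt_div_iff₀ (by positivity)]
      nlinarith
    have hint : IntegrableOn (fun x : ℝ => (1/δ)^k * x ^ (q - k * δ)) (Ioc (0:ℝ) 1) := by
      have h5 := intervalIntegral.intervalIntegrable_rpow' (a := (0:ℝ)) (b := 1) hexp
      rw [intervalIntegrable_iff_integrableOn_Ioc_of_le zero_le_one] at h5
      exact h5.const_mul _
    refine Integrable.mono hint (aesm_logpow k _) ?_
    filter_upwards [ae_restrict_mem measurableSet_Ioc] with x hx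
    have hx0 : 0 < x := hx.1
    have hlog : |log x| ≤ x ^ (-δ) / δ := by
      rw [abs_of_nonpos (log_nonpos hx0.le hx.2), ← log_inv]
      calc log x⁻¹ ≤ (x⁻¹) ^ δ / δ := Real.log_le_rpow_div (by positivity) hδ
        _ = x ^ (-δ) / δ := by rw [← Real.rpow_neg_one x, ← Real.rpow_mul hx0.le, neg_one_mul]
    have hnorm : ‖log x ^ k * (x ^ q * exp (-(θ * x)))‖
        = |log x| ^ k * (x ^ q * exp (-(θ * x))) := by
      rw [norm_mul, norm_pow, norm_mul, Real.norm_eq_abs, Real.norm_eq_abs, Real.norm_eq_abs,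
        abs_of_pos (Real.rpow_pos_of_pos hx0 q), Real.abs_exp]
    have hbound : |log x| ^ k * (x ^ q * exp (-(θ * x))) ≤ (1/δ)^k * x ^ (q - k * δ) := by
      have he1 : exp (-(θ * x)) ≤ 1 := exp_le_one_iff.mpr (by nlinarith)
      have h2 : |log x| ^ k ≤ (x ^ (-δ) / δ) ^ k := pow_le_pow_left₀ (abs_nonneg _) hlog k
      calc |log x| ^ k * (x ^ q * exp (-(θ * x)))
          ≤ (x ^ (-δ) / δ) ^ k * (x ^ q * 1) := by
            apply mul_le_mul h2 _ (by positivity) (by positivity)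
            apply mul_le_mul_of_nonneg_left he1 (by positivity)
        _ = (1/δ)^k * ((x ^ (-δ)) ^ k * x ^ q) := by ring
        _ = (1/δ)^k * x ^ (q - k * δ) := by
            rw [← Real.rpow_natCast (x ^ (-δ)) k, ← Real.rpow_mul hx0.le, ← Real.rpow_add hx0]
            congr 2
            ring
    have hnorm2 : ‖(1/δ)^k * x ^ (q - ↑k * δ)‖ = (1/δ)^k * x ^ (q - ↑k * δ) := by
      rw [Real.norm_eq_abs, abs_of_nonneg (by positivity)]
    rw [hnorm, hnorm2]
    exact hbound
  · -- on (1,∞)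
    have hint : IntegrableOn (fun x : ℝ => x ^ (q + k) * exp (-(θ * x))) (Ioi (1:ℝ)) :=
      (integrableOn_rpow_exp hθ (by push_cast; linarith [Nat.cast_nonneg (α := ℝ) k])).mono_set
        (Ioi_subset_Ioi zero_le_one)
    refine Integrable.mono hint (aesm_logpow k _) ?_
    filter_upwards [ae_restrict_mem measurableSet_Ioi] with x hx
    have hx1 : (1:ℝ) < x := hx
    have hx0 : (0:ℝ) < x := lt_trans one_pos hx1
    have hlog : |log x| ≤ x := by
      rw [abs_of_nonneg (log_nonneg hx1.le)]
      linarith [Real.log_le_sub_one_of_pos hx0]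
    have hnorm : ‖log x ^ k * (x ^ q * exp (-(θ * x)))‖
        = |log x| ^ k * (x ^ q * exp (-(θ * x))) := by
      rw [norm_mul, norm_pow, norm_mul, Real.norm_eq_abs, Real.norm_eq_abs, Real.norm_eq_abs,
        abs_of_pos (Real.rpow_pos_of_pos hx0 q), Real.abs_exp]
    have hnorm2 : ‖x ^ (q + (k:ℝ)) * exp (-(θ * x))‖ = x ^ (q + (k:ℝ)) * exp (-(θ * x)) := by
      rw [Real.norm_eq_abs, abs_of_nonneg (by positivity)]
    rw [hnorm, hnorm2, Real.rpow_add hx0]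
    have h2 : |log x| ^ k ≤ x ^ (k:ℝ) := by
      rw [Real.rpow_natCast]
      exact pow_le_pow_left₀ (abs_nonneg _) hlog k
    calc |log x| ^ k * (x ^ q * exp (-(θ * x)))
        ≤ x ^ (k:ℝ) * (x ^ q * exp (-(θ * x))) := by
          apply mul_le_mul_of_nonneg_right h2 (by positivity)
      _ = x ^ q * x ^ (k:ℝ) * exp (-(θ * x)) := by ring

/-- `A θ k s = ∫_{0}^{∞} (log x)^k x^{s-1} e^{-θ x} dx`. -/
noncomputable def A (θ : ℝ) (k : ℕ) (s : ℝ) : ℝ :=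
  ∫ x in Ioi (0:ℝ), log x ^ k * (x ^ (s - 1) * exp (-(θ * x)))

lemma A_rec {θ m : ℝ} (hθ : 0 < θ) (hm : 0 < m) (k : ℕ) :
    θ * A θ k (m + 1) = k * A θ (k - 1) m + m * A θ k m := by
  set F : ℝ → ℝ := fun x => log x ^ k * (x ^ m * exp (-(θ * x))) with hF
  set g : ℝ → ℝ := fun x =>
    (k : ℝ) * (log x ^ (k - 1) * (x ^ (m - 1) * exp (-(θ * x))))
      + m * (log x ^ k * (x ^ (m - 1) * exp (-(θ * x))))
      - θ * (log x ^ k * (x ^ (m + 1 - 1) * exp (-(θ * x)))) with hg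
  have hderiv : ∀ x ∈ Ioi (0:ℝ), HasDerivAt F (g x) x := by
    intro x hx
    have hx0 : (0:ℝ) < x := hx
    have h1 : HasDerivAt (fun x : ℝ => log x ^ k)
        ((k : ℝ) * log x ^ (k - 1) * x⁻¹) x := (Real.hasDerivAt_log hx0.ne').pow k
    have h2 : HasDerivAt (fun x : ℝ => x ^ m) (m * x ^ (m - 1)) x :=
      Real.hasDerivAt_rpow_const (Or.inl hx0.ne')
    have h3 : HasDerivAt (fun x : ℝ => exp (-(θ * x))) (exp (-(θ * x)) * (-θ)) x := by
      have := ((hasDerivAt_id x).const_mul θ).neg.exp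
      simpa [mul_comm] using this
    have h4 := (h2.mul h3)
    have h5 := h1.mul h4
    refine h5.congr_deriv ?_; symm
    have hxm : x ^ m = x ^ (m - 1) * x := by
      rw [← Real.rpow_add_one hx0.ne']; ring_nf
    simp only [hg, add_sub_cancel_right, Pi.mul_apply]
    rw [hxm]
    field_simp
    ring
  have hcont : ContinuousWithinAt F (Ici 0) 0 := by
    rw [← continuousWithinAt_Ioi_iff_Ici]
    have hF0 : F 0 = 0 := by
      simp [hF, Real.log_zero, Real.zero_rpow hm.ne']
    rw [ContinuousWithinAt, hF0]
    have hlim : Tendsto (fun x : ℝ => log x ^ k * x ^ m) (𝓝[>] 0) (𝓝 0) := by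
      rcases Nat.eq_zero_or_pos k with hk | hk
      · subst hk
        simp only [pow_zero, one_mul]
        have : Tendsto (fun x : ℝ => x ^ m) (𝓝[>] 0) (𝓝 0) := by
          have := (Real.continuousAt_rpow_const 0 m (Or.inr hm.le)).continuousWithinAt (s := Ioi 0)
          simpa [ContinuousWithinAt, Real.zero_rpow hm.ne'] using this
        exact this
      · have hmk : 0 < m / k := div_pos hm (by exact_mod_cast hk)
        have h := (tendsto_log_mul_rpow_nhdsGT_zero hmk).pow k
        rw [zero_pow hk.ne'] at h
        refine h.congr' ?_
        filter_upwards [self_mem_nhdsWithin] with x hx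
        have hx0 : (0:ℝ) < x := hx
        rw [mul_pow, ← Real.rpow_natCast (x ^ (m / (k:ℝ))) k, ← Real.rpow_mul hx0.le,
          div_mul_cancel₀]
        exact_mod_cast hk.ne'
    have hexp : Tendsto (fun x : ℝ => exp (-(θ * x))) (𝓝[>] 0) (𝓝 1) := by
      have : Continuous (fun x : ℝ => exp (-(θ * x))) := by continuity
      have h := this.continuousWithinAt (s := Ioi 0) (x := 0)
      simpa [ContinuousWithinAt] using h
    have := hlim.mul hexp
    rw [zero_mul] at this
    refine this.congr (fun x => ?_)
    simp [hF]; ring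
  have htop : Tendsto F atTop (𝓝 0) := by
    have hb : Tendsto (fun x : ℝ => x ^ ((k : ℝ) + m) * exp (-θ * x)) atTop (𝓝 0) :=
      tendsto_rpow_mul_exp_neg_mul_atTop_nhds_zero _ θ hθ
    apply squeeze_zero_norm' _ hb
    filter_upwards [eventually_ge_atTop (1:ℝ)] with x hx1
    have hx0 : (0:ℝ) < x := lt_of_lt_of_le one_pos hx1
    have hlog : |log x| ≤ x := by
      rw [abs_of_nonneg (log_nonneg hx1)]
      linarith [Real.log_le_sub_one_of_pos hx0]
    have : ‖F x‖ = |log x| ^ k * (x ^ m * exp (-(θ * x))) := by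
      rw [hF]
      simp only
      rw [norm_mul, norm_pow, norm_mul, Real.norm_eq_abs, Real.norm_eq_abs, Real.norm_eq_abs,
        abs_of_pos (Real.rpow_pos_of_pos hx0 m), Real.abs_exp]
    rw [this]
    have h2 : |log x| ^ k ≤ x ^ (k:ℝ) := by
      rw [Real.rpow_natCast]
      exact pow_le_pow_left₀ (abs_nonneg _) hlog k
    calc |log x| ^ k * (x ^ m * exp (-(θ * x)))
        ≤ x ^ (k:ℝ) * (x ^ m * exp (-(θ * x))) :=
          mul_le_mul_of_nonneg_right h2 (by positivity)
      _ = x ^ ((k:ℝ) + m) * exp (-θ * x) := by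
          rw [Real.rpow_add hx0, neg_mul]; ring
  have hi1 : IntegrableOn (fun x : ℝ => log x ^ (k-1) * (x ^ (m-1) * exp (-(θ * x)))) (Ioi 0) :=
    integrableOn_logpow_rpow_exp hθ (by linarith) (k-1)
  have hi2 : IntegrableOn (fun x : ℝ => log x ^ k * (x ^ (m-1) * exp (-(θ * x)))) (Ioi 0) :=
    integrableOn_logpow_rpow_exp hθ (by linarith) k
  have hi3 : IntegrableOn (fun x : ℝ => log x ^ k * (x ^ (m+1-1) * exp (-(θ * x)))) (Ioi 0) := by
    have : (-1:ℝ) < m + 1 - 1 := by linarith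
    exact integrableOn_logpow_rpow_exp hθ this k
  have hgint : IntegrableOn g (Ioi (0:ℝ)) := by
    rw [hg]
    exact (((hi1.const_mul _).add (hi2.const_mul _)).sub (hi3.const_mul _))
  have hzero : ∫ x in Ioi (0:ℝ), g x = 0 := by
    have := integral_Ioi_of_hasDerivAt_of_tendsto hcont hderiv hgint htop
    rw [this]
    have hF0 : F 0 = 0 := by
      simp [hF, Real.log_zero, Real.zero_rpow hm.ne']
    rw [hF0, sub_zero]
  have hsplit : ∫ x in Ioi (0:ℝ), g x
      = (k:ℝ) * A θ (k-1) m + m * A θ k m - θ * A θ k (m+1) := by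
    have ha : Integrable (fun x : ℝ => (k:ℝ) * (log x ^ (k-1) * (x ^ (m-1) * exp (-(θ*x))))
        + m * (log x ^ k * (x ^ (m-1) * exp (-(θ*x))))) (volume.restrict (Ioi 0)) :=
      (hi1.const_mul _).add (hi2.const_mul _)
    have hb : Integrable (fun x : ℝ => θ * (log x ^ k * (x ^ (m+1-1) * exp (-(θ*x)))))
        (volume.restrict (Ioi 0)) := hi3.const_mul _
    rw [hg]
    rw [MeasureTheory.integral_sub ha hb,
      MeasureTheory.integral_add (hi1.const_mul _) (hi2.const_mul _),
      integral_const_mul, integral_const_mul, integral_const_mul]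
    rfl
  rw [hsplit] at hzero
  linarith
lemma A0_eq {θ m : ℝ} (hθ : 0 < θ) (hm : 0 < m) :
    A θ 0 m = (1/θ) ^ m * Real.Gamma m := by
  rw [← integral_rpow_mul_exp_neg_mul_Ioi hm hθ]
  unfold A
  simp only [pow_zero, one_mul]

lemma A0_pos {θ m : ℝ} (hθ : 0 < θ) (hm : 0 < m) : 0 < A θ 0 m := by
  rw [A0_eq hθ hm]
  have := Real.Gamma_pos_of_pos hm
  positivity

/-- normalized variance of `log` under the Gamma(m, θ) weight -/
noncomputable def v (θ m : ℝ) : ℝ :=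
  A θ 2 m / A θ 0 m - (A θ 1 m / A θ 0 m) ^ 2

lemma quad {θ m : ℝ} (hθ : 0 < θ) (hm : 0 < m) (c : ℝ) :
    ∫ x in Ioi (0:ℝ), (log x - c) ^ 2 * (x ^ (m - 1) * exp (-(θ * x)))
      = A θ 2 m - 2 * c * A θ 1 m + c ^ 2 * A θ 0 m := by
  have hi0 := integrableOn_logpow_rpow_exp hθ (by linarith : (-1:ℝ) < m - 1) 0
  have hi1 := integrableOn_logpow_rpow_exp hθ (by linarith : (-1:ℝ) < m - 1) 1
  have hi2 := integrableOn_logpow_rpow_exp hθ (by linarith : (-1:ℝ) < m - 1) 2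
  have hfun : (fun x : ℝ => (log x - c) ^ 2 * (x ^ (m - 1) * exp (-(θ * x))))
      = fun x : ℝ => (log x ^ 2 * (x ^ (m-1) * exp (-(θ*x)))
          - (2*c) * (log x ^ 1 * (x ^ (m-1) * exp (-(θ*x)))))
          + c ^ 2 * (log x ^ 0 * (x ^ (m-1) * exp (-(θ*x)))) := by
    funext x; ring
  rw [hfun]
  have ha : Integrable (fun x : ℝ => log x ^ 2 * (x ^ (m-1) * exp (-(θ*x)))
      - (2*c) * (log x ^ 1 * (x ^ (m-1) * exp (-(θ*x))))) (volume.restrict (Ioi 0)) :=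
    hi2.sub (hi1.const_mul _)
  have hb : Integrable (fun x : ℝ => c ^ 2 * (log x ^ 0 * (x ^ (m-1) * exp (-(θ*x)))))
      (volume.restrict (Ioi 0)) := hi0.const_mul _
  rw [MeasureTheory.integral_add ha hb, MeasureTheory.integral_sub hi2 (hi1.const_mul _),
    integral_const_mul, integral_const_mul]
  show A θ 2 m - 2*c * A θ 1 m + c^2 * A θ 0 m = _
  ring

lemma quad_integrable {θ m : ℝ} (hθ : 0 < θ) (hm : 0 < m) (c : ℝ) :
    IntegrableOn (fun x : ℝ => (log x - c) ^ 2 * (x ^ (m - 1) * exp (-(θ * x)))) (Ioi 0) := by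
  have hi0 := integrableOn_logpow_rpow_exp hθ (by linarith : (-1:ℝ) < m - 1) 0
  have hi1 := integrableOn_logpow_rpow_exp hθ (by linarith : (-1:ℝ) < m - 1) 1
  have hi2 := integrableOn_logpow_rpow_exp hθ (by linarith : (-1:ℝ) < m - 1) 2
  have hfun : (fun x : ℝ => (log x - c) ^ 2 * (x ^ (m - 1) * exp (-(θ * x))))
      = fun x : ℝ => (log x ^ 2 * (x ^ (m-1) * exp (-(θ*x)))
          - (2*c) * (log x ^ 1 * (x ^ (m-1) * exp (-(θ*x)))))
          + c ^ 2 * (log x ^ 0 * (x ^ (m-1) * exp (-(θ*x)))) := by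
    funext x; ring
  rw [hfun]
  exact (hi2.sub (hi1.const_mul _)).add (hi0.const_mul _)

lemma v_nonneg {θ m : ℝ} (hθ : 0 < θ) (hm : 0 < m) : 0 ≤ v θ m := by
  have hA0 := A0_pos hθ hm
  set c : ℝ := A θ 1 m / A θ 0 m with hc
  have hq := quad hθ hm c
  have hnn : 0 ≤ A θ 2 m - 2 * c * A θ 1 m + c ^ 2 * A θ 0 m := by
    rw [← hq]
    refine setIntegral_nonneg measurableSet_Ioi (fun x hx => ?_)
    exact mul_nonneg (sq_nonneg _)
      (mul_nonneg (Real.rpow_nonneg (le_of_lt hx) _) (exp_pos _).le)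
  have hv : v θ m = (A θ 2 m - 2 * c * A θ 1 m + c ^ 2 * A θ 0 m) / A θ 0 m := by
    unfold v; rw [hc]; field_simp; ring
  rw [hv]
  exact div_nonneg hnn hA0.le

lemma v_rec {θ m : ℝ} (hθ : 0 < θ) (hm : 0 < m) : v θ m = 1 / m ^ 2 + v θ (m + 1) := by
  have hA0 := (A0_pos hθ hm).ne'
  have h0 := A_rec hθ hm 0
  have h1 := A_rec hθ hm 1
  have h2 := A_rec hθ hm 2
  simp only [Nat.cast_zero, Nat.cast_one, Nat.cast_ofNat, zero_mul, zero_add] at h0 h1 h2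
  have e0 : A θ 0 (m+1) = m * A θ 0 m / θ := by
    rw [eq_div_iff hθ.ne']; linarith
  have e1 : A θ 1 (m+1) = (A θ 0 m + m * A θ 1 m) / θ := by
    rw [eq_div_iff hθ.ne']; rw [show (1:ℕ) - 1 = 0 from rfl] at h1; linarith
  have e2 : A θ 2 (m+1) = (2 * A θ 1 m + m * A θ 2 m) / θ := by
    rw [eq_div_iff hθ.ne']; rw [show (2:ℕ) - 1 = 1 from rfl] at h2; linarith
  unfold v
  rw [e0, e1, e2]
  field_simp
  ring

lemma aux_mono {u : ℝ} (hu : 1 ≤ u) : 2 * log u ≤ u - u⁻¹ := by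
  set f : ℝ → ℝ := fun u => u - u⁻¹ - 2 * log u with hf
  have hd : ∀ x : ℝ, 0 < x → HasDerivAt f (1 + (x^2)⁻¹ - 2 * x⁻¹) x := by
    intro x hx
    have h1 : HasDerivAt (fun y : ℝ => y - y⁻¹) (1 - -(x^2)⁻¹) x :=
      (hasDerivAt_id x).sub (hasDerivAt_inv hx.ne')
    have h2 : HasDerivAt (fun y : ℝ => 2 * log y) (2 * x⁻¹) x :=
      (Real.hasDerivAt_log hx.ne').const_mul 2
    have := h1.sub h2
    refine this.congr_deriv ?_
    ring
  have hmono : MonotoneOn f (Ici 1) := by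
    apply monotoneOn_of_deriv_nonneg (convex_Ici 1)
    · apply ContinuousOn.sub (ContinuousOn.sub continuousOn_id ?_) ?_
      · exact continuousOn_inv₀.mono (fun x hx => by
          simp only [mem_compl_iff, mem_singleton_iff]
          intro h; rw [h] at hx; exact absurd hx (by norm_num))
      · exact (continuousOn_const.mul (Real.continuousOn_log.mono (fun x hx => by
          simp only [mem_compl_iff, mem_singleton_iff]
          intro h; rw [h] at hx; exact absurd hx (by norm_num))))
    · intro x hx
      rw [interior_Ici] at hx
      exact ((hd x (lt_trans one_pos hx)).differentiableAt).differentiableWithinAt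
    · intro x hx
      rw [interior_Ici] at hx
      have hx0 : (0:ℝ) < x := lt_trans one_pos hx
      rw [(hd x hx0).deriv]
      have hip : ((x:ℝ)^2)⁻¹ = (x⁻¹)^2 := (inv_pow x 2).symm
      rw [hip]
      nlinarith [sq_nonneg (1 - x⁻¹)]
  have h1 : f 1 = 0 := by simp [hf]
  have := hmono (self_mem_Ici) (mem_Ici.mpr hu) hu
  rw [h1] at this
  simp only [hf] at this
  linarith

lemma sq_log_le {t : ℝ} (ht : 0 < t) : (log t) ^ 2 ≤ (t - 1) ^ 2 / t := by
  have key : ∀ s : ℝ, 1 ≤ s → (log s) ^ 2 ≤ (s - 1) ^ 2 / s := by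
    intro s hs
    have hs0 : (0:ℝ) < s := lt_of_lt_of_le one_pos hs
    have hu : (1:ℝ) ≤ sqrt s := by
      rw [show (1:ℝ) = sqrt 1 from (Real.sqrt_one).symm]
      exact Real.sqrt_le_sqrt hs
    have hu0 : (0:ℝ) < sqrt s := lt_of_lt_of_le one_pos hu
    have hlog : log s = 2 * log (sqrt s) := by
      rw [Real.log_sqrt hs0.le]; ring
    have hle := aux_mono hu
    have hnn : 0 ≤ log s := Real.log_nonneg hs
    have hb : sqrt s - (sqrt s)⁻¹ ≥ 0 := by
      have : (sqrt s)⁻¹ ≤ 1 := by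
        rw [inv_le_one_iff₀]; right; exact hu
      nlinarith
    have hsq : (log s) ^ 2 ≤ (sqrt s - (sqrt s)⁻¹) ^ 2 := by
      apply sq_le_sq' (by linarith [hlog ▸ hle]) (by rw [hlog]; linarith)
    refine hsq.trans (le_of_eq ?_)
    have hss : sqrt s * sqrt s = s := Real.mul_self_sqrt hs0.le
    field_simp
    rw [Real.sq_sqrt hs0.le]; ring
  rcases le_or_gt 1 t with h | h
  · exact key t h
  · have h2 := key t⁻¹ (one_le_inv_iff₀.mpr ⟨ht, h.le⟩)
    rw [Real.log_inv, neg_sq] at h2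
    refine h2.trans (le_of_eq ?_)
    field_simp
    ring

lemma v_le {θ m : ℝ} (hθ : 0 < θ) (hm1 : 1 < m) : v θ m ≤ 1 / (m - 1) := by
  have hm : 0 < m := lt_trans one_pos hm1
  have hA0 := A0_pos hθ hm
  set c : ℝ := log (m / θ) with hc
  -- pointwise bound
  have hpt : ∀ x ∈ Ioi (0:ℝ),
      (log x - c) ^ 2 * (x ^ (m - 1) * exp (-(θ * x)))
        ≤ (θ/m) * (log x ^ 0 * (x ^ ((m+1) - 1) * exp (-(θ * x))))
          - 2 * (log x ^ 0 * (x ^ (m - 1) * exp (-(θ * x))))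
          + (m/θ) * (log x ^ 0 * (x ^ ((m-1) - 1) * exp (-(θ * x)))) := by
    intro x hx
    have hx0 : (0:ℝ) < x := hx
    have ht : (0:ℝ) < θ * x / m := by positivity
    have hkey := sq_log_le ht
    have hlogt : log (θ * x / m) = log x - c := by
      rw [hc, Real.log_div (by positivity) hθ.ne', Real.log_div (by positivity) hm.ne',
        Real.log_mul hθ.ne' hx0.ne']
      ring
    rw [hlogt] at hkey
    have hxm : x ^ ((m+1) - 1) = x ^ (m-1) * x := by
      rw [add_sub_cancel_right, ← Real.rpow_add_one hx0.ne']; ring_nf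
    have hxm2 : x ^ ((m-1) - 1) = x ^ (m-1) / x := by
      rw [← Real.rpow_sub_one hx0.ne']
    have hw : (0:ℝ) < x ^ (m-1) * exp (-(θ * x)) := by positivity
    have h2 : (log x - c) ^ 2 * (x ^ (m - 1) * exp (-(θ * x)))
        ≤ ((θ * x / m - 1) ^ 2 / (θ * x / m)) * (x ^ (m - 1) * exp (-(θ * x))) :=
      mul_le_mul_of_nonneg_right hkey hw.le
    refine h2.trans (le_of_eq ?_)
    simp only [pow_zero, one_mul]
    rw [hxm, hxm2]
    field_simp
    ring
  -- integrability of both sides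
  have hiL := quad_integrable hθ hm c
  have hi00 := integrableOn_logpow_rpow_exp hθ (by linarith : (-1:ℝ) < m - 1) 0
  have hi0p : IntegrableOn (fun x : ℝ => log x ^ 0 * (x ^ ((m+1) - 1) * exp (-(θ*x)))) (Ioi 0) :=
    integrableOn_logpow_rpow_exp hθ (by linarith : (-1:ℝ) < (m+1) - 1) 0
  have hi0m : IntegrableOn (fun x : ℝ => log x ^ 0 * (x ^ ((m-1) - 1) * exp (-(θ*x)))) (Ioi 0) :=
    integrableOn_logpow_rpow_exp hθ (by linarith : (-1:ℝ) < (m-1) - 1) 0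
  have hiR : IntegrableOn (fun x : ℝ =>
      (θ/m) * (log x ^ 0 * (x ^ ((m+1) - 1) * exp (-(θ * x))))
        - 2 * (log x ^ 0 * (x ^ (m - 1) * exp (-(θ * x))))
        + (m/θ) * (log x ^ 0 * (x ^ ((m-1) - 1) * exp (-(θ * x))))) (Ioi 0) :=
    ((hi0p.const_mul _).sub (hi00.const_mul _)).add (hi0m.const_mul _)
  have hmono := setIntegral_mono_on hiL hiR measurableSet_Ioi hpt
  -- compute RHS integral
  have hRval : ∫ x in Ioi (0:ℝ),
      ((θ/m) * (log x ^ 0 * (x ^ ((m+1) - 1) * exp (-(θ * x))))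
        - 2 * (log x ^ 0 * (x ^ (m - 1) * exp (-(θ * x))))
        + (m/θ) * (log x ^ 0 * (x ^ ((m-1) - 1) * exp (-(θ * x)))))
      = (θ/m) * A θ 0 (m+1) - 2 * A θ 0 m + (m/θ) * A θ 0 (m-1) := by
    have hab : Integrable (fun x : ℝ =>
        (θ/m) * (log x ^ 0 * (x ^ ((m+1) - 1) * exp (-(θ * x))))
          - 2 * (log x ^ 0 * (x ^ (m - 1) * exp (-(θ * x))))) (volume.restrict (Ioi 0)) :=
      (hi0p.const_mul _).sub (hi00.const_mul _)
    have hcc : Integrable (fun x : ℝ =>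
        (m/θ) * (log x ^ 0 * (x ^ ((m-1) - 1) * exp (-(θ * x))))) (volume.restrict (Ioi 0)) :=
      hi0m.const_mul _
    rw [MeasureTheory.integral_add hab hcc,
      MeasureTheory.integral_sub (hi0p.const_mul _) (hi00.const_mul _),
      integral_const_mul, integral_const_mul, integral_const_mul]
    rfl
  -- ratio facts
  have h0 := A_rec hθ hm 0
  simp only [Nat.cast_zero, zero_mul, zero_add] at h0
  have h0' := A_rec hθ (by linarith : (0:ℝ) < m - 1) 0
  simp only [Nat.cast_zero, zero_mul, zero_add, sub_add_cancel] at h0'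
  -- h0 : θ * A θ 0 (m+1) = m * A θ 0 m ; h0' : θ * A θ 0 m = (m-1) * A θ 0 (m-1)
  have hRsimp : (θ/m) * A θ 0 (m+1) - 2 * A θ 0 m + (m/θ) * A θ 0 (m-1)
      = A θ 0 m / (m - 1) := by
    have e0 : A θ 0 (m+1) = m * A θ 0 m / θ := by rw [eq_div_iff hθ.ne']; linarith
    have e0' : A θ 0 (m-1) = θ * A θ 0 m / (m-1) := by
      rw [eq_div_iff (by linarith : m - 1 ≠ 0)]; linarith
    rw [e0, e0']
    have hne : m - 1 ≠ 0 := sub_ne_zero.mpr (ne_of_gt hm1)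
    field_simp
    ring
  rw [quad hθ hm c, hRval, hRsimp] at hmono
  -- compare v with the quadratic at c
  have hv : (A θ 2 m - 2 * c * A θ 1 m + c ^ 2 * A θ 0 m) / A θ 0 m - v θ m
      = (A θ 1 m / A θ 0 m - c) ^ 2 := by
    unfold v; field_simp; ring
  have hle1 : v θ m ≤ (A θ 2 m - 2 * c * A θ 1 m + c ^ 2 * A θ 0 m) / A θ 0 m := by
    nlinarith [sq_nonneg (A θ 1 m / A θ 0 m - c)]
  have hle2 : (A θ 2 m - 2 * c * A θ 1 m + c ^ 2 * A θ 0 m) / A θ 0 m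
      ≤ (A θ 0 m / (m - 1)) / A θ 0 m := by
    gcongr
  have hsimp : (A θ 0 m / (m - 1)) / A θ 0 m = 1 / (m-1) := by
    rw [div_right_comm, div_self hA0.ne']
  linarith [hle1, hle2.trans_eq hsimp]

lemma v_eq_tsum {θ m : ℝ} (hθ : 0 < θ) (hm : 0 < m) :
    v θ m = ∑' n : ℕ, 1 / (m + n) ^ 2 := by
  have htel : ∀ N : ℕ, v θ m = (∑ i ∈ Finset.range N, 1 / (m + i) ^ 2) + v θ (m + N) := by
    intro N
    induction N with
    | zero => simp
    | succ N ih =>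
      have harg : m + ((N:ℝ) + 1) = (m + (N:ℝ)) + 1 := by ring
      rw [ih, Finset.sum_range_succ, v_rec hθ (by positivity : (0:ℝ) < m + N)]
      push_cast
      rw [harg]
      ring
  have hlim : Tendsto (fun N : ℕ => v θ (m + N)) atTop (𝓝 0) := by
    have hup : Tendsto (fun N : ℕ => 1 / (m + N - 1)) atTop (𝓝 0) := by
      have h1 : Tendsto (fun N : ℕ => m + (N:ℝ) - 1) atTop atTop := by
        have := tendsto_natCast_atTop_atTop (R := ℝ)
        have h2 := tendsto_atTop_add_const_right atTop (m - 1) this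
        refine h2.congr (fun N => by ring)
      simpa only [one_div, Pi.inv_def] using h1.inv_tendsto_atTop
    apply squeeze_zero' ?_ ?_ hup
    · filter_upwards with N
      exact v_nonneg hθ (by positivity)
    · filter_upwards [eventually_ge_atTop 1] with N hN
      have hN1 : (1:ℝ) ≤ (N:ℝ) := by exact_mod_cast hN
      have := v_le hθ (by linarith : 1 < m + (N:ℝ))
      simpa [add_sub_assoc] using this
  have hsum : Tendsto (fun N : ℕ => ∑ i ∈ Finset.range N, 1 / (m + i) ^ 2) atTop (𝓝 (v θ m)) := by
    have : (fun N : ℕ => ∑ i ∈ Finset.range N, 1 / (m + i) ^ 2)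
        = fun N : ℕ => v θ m - v θ (m + (N:ℝ)) := by
      funext N
      have := htel N
      linarith
    rw [this]
    simpa using tendsto_const_nhds.sub hlim
  have hnn : ∀ i : ℕ, (0:ℝ) ≤ 1 / (m + i) ^ 2 := fun i => by positivity
  exact ((hasSum_iff_tendsto_nat_of_nonneg hnn _).mpr hsum).tsum_eq.symm

end GammaVarAux

open GammaVarAux
open scoped ENNReal NNReal
open Filter Topology

/-- If `W` is Gamma-distributed with shape `m > 0` and rate `θ > 0`, then the variance of
`log W` equals the Hurwitz zeta value `ζ(2, m) = ∑_{n=0}^∞ 1/(m+n)²`; in particular it does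
not depend on `θ`. -/
theorem gamma_variance_log
    {Ω : Type*} [MeasurableSpace Ω] (P : Measure Ω) [IsProbabilityMeasure P]
    (W : Ω → ℝ) (hW : Measurable W)
    (m θ : ℝ) (hm : 0 < m) (hθ : 0 < θ)
    (hlaw : Measure.map W P = gammaMeasure m θ) :
    variance (fun ω => Real.log (W ω)) P = ∑' n : ℕ, 1 / (m + n) ^ 2 := by
  classical
  set c : ℝ := θ ^ m / Real.Gamma m with hc
  have hΓ : Real.Gamma m ≠ 0 := (Real.Gamma_pos_of_pos hm).ne'
  have hmeaspdf : Measurable (fun x => (ProbabilityTheory.gammaPDFReal m θ x).toNNReal) :=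
    (ProbabilityTheory.measurable_gammaPDFReal m θ).real_toNNReal
  have hne : gammaMeasure m θ
      = volume.withDensity (fun x => ((ProbabilityTheory.gammaPDFReal m θ x).toNNReal : ℝ≥0∞)) := by
    rfl
  -- a.e. identification of the weighted integrand
  have hae : ∀ k : ℕ, (fun x => (ProbabilityTheory.gammaPDFReal m θ x).toNNReal • log x ^ k)
      =ᵐ[volume] (Ioi (0:ℝ)).indicator
        (fun x => c * (log x ^ k * (x ^ (m-1) * exp (-(θ * x))))) := by
    intro k
    have h0 : (volume : Measure ℝ) {0} = 0 := Real.volume_singleton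
    filter_upwards [compl_mem_ae_iff.mpr h0] with x hx
    have hx0 : x ≠ 0 := hx
    rcases lt_or_gt_of_ne hx0 with hneg | hpos
    · rw [indicator_of_notMem (by simp [mem_Ioi]; linarith)]
      have : ProbabilityTheory.gammaPDFReal m θ x = 0 := by
        unfold ProbabilityTheory.gammaPDFReal
        rw [if_neg (by linarith)]
      simp [this, NNReal.smul_def]
    · rw [indicator_of_mem (mem_Ioi.mpr hpos)]
      have hpdf : ProbabilityTheory.gammaPDFReal m θ x
          = c * (x ^ (m-1) * exp (-(θ * x))) := by
        unfold ProbabilityTheory.gammaPDFReal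
        rw [if_pos hpos.le, hc]
        ring
      have hnn : 0 ≤ ProbabilityTheory.gammaPDFReal m θ x :=
        ProbabilityTheory.gammaPDFReal_nonneg hm hθ x
      rw [NNReal.smul_def, Real.coe_toNNReal _ hnn, hpdf]
      simp only [smul_eq_mul]
      ring
  -- integrals of log-powers
  have hInt : ∀ k : ℕ, ∫ x, log x ^ k ∂(gammaMeasure m θ) = c * A θ k m := by
    intro k
    rw [hne, integral_withDensity_eq_integral_smul hmeaspdf]
    rw [integral_congr_ae (hae k), integral_indicator measurableSet_Ioi, integral_const_mul]
    rfl
  -- integrability of log^2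
  have hIntOn2 : IntegrableOn
      (fun x => c * (log x ^ 2 * (x ^ (m-1) * exp (-(θ * x))))) (Ioi (0:ℝ)) :=
    (integrableOn_logpow_rpow_exp hθ (by linarith : (-1:ℝ) < m - 1) 2).const_mul c
  have hmem2γ : MemLp (fun x => log x) 2 (gammaMeasure m θ) := by
    refine (memLp_two_iff_integrable_sq Real.measurable_log.aestronglyMeasurable).mpr ?_
    rw [hne, integrable_withDensity_iff_integrable_smul hmeaspdf]
    refine Integrable.congr ?_ (hae 2).symm
    rwa [integrable_indicator_iff measurableSet_Ioi]
  -- transfer to P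
  have hmemP : MemLp (fun ω => Real.log (W ω)) 2 P := by
    have h1 : MemLp (fun x => log x) 2 (Measure.map W P) := by rw [hlaw]; exact hmem2γ
    have := (memLp_map_measure_iff (μ := P) (f := W) (g := fun x => log x)
      Real.measurable_log.aestronglyMeasurable hW.aemeasurable).mp h1
    exact this
  -- the two moments
  have hE2 : ∫ ω, log (W ω) ^ 2 ∂P = c * A θ 2 m := by
    have hsm : AEStronglyMeasurable (fun x : ℝ => log x ^ 2) (Measure.map W P) :=
      (Real.measurable_log.pow_const 2).aestronglyMeasurable
    have h := integral_map hW.aemeasurable hsm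
    rw [hlaw, hInt 2] at h
    exact h.symm
  have hE1 : ∫ ω, log (W ω) ∂P = c * A θ 1 m := by
    have hsm : AEStronglyMeasurable (fun x : ℝ => log x) (Measure.map W P) :=
      Real.measurable_log.aestronglyMeasurable
    have h := integral_map hW.aemeasurable hsm
    rw [hlaw] at h
    have h1 : ∫ x, log x ∂(gammaMeasure m θ) = c * A θ 1 m := by
      rw [← hInt 1]
      exact integral_congr_ae (Eventually.of_forall fun x => by simp)
    rw [h1] at h
    exact h.symm
  rw [ProbabilityTheory.variance_eq_sub hmemP]
  simp only [Pi.pow_apply]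
  rw [hE2, hE1]
  have h2 : (θ:ℝ)^m * (1/θ)^m = 1 := by
    rw [← Real.mul_rpow hθ.le (by positivity), mul_one_div_cancel hθ.ne', Real.one_rpow]
  have hcA0 : c * A θ 0 m = 1 := by
    calc c * A θ 0 m = (θ^m * (1/θ)^m) * (Real.Gamma m / Real.Gamma m) := by
          rw [A0_eq hθ hm, hc]; ring
      _ = 1 := by rw [h2, div_self hΓ, mul_one]
  have hc' : c = (A θ 0 m)⁻¹ := eq_inv_of_mul_eq_one_left hcA0
  rw [← v_eq_tsum hθ hm, hc']
  show (A θ 0 m)⁻¹ * A θ 2 m - ((A θ 0 m)⁻¹ * A θ 1 m) ^ 2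
      = A θ 2 m / A θ 0 m - (A θ 1 m / A θ 0 m) ^ 2
  simp only [div_eq_mul_inv]
  ring
end
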